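/- Let n ≥ 1, let Φ and Ψ be Young functions, and let ρ:(0,∞)→(0,∞) be increasing such that r ↦ r^{−n}ρ(r) is decreasing. Assume there is a constant C > 0 with ρ(r) ≤ C Ψ^{-1}(r^{-n}) / Φ^{-1}(r^{-n}) for all r > 0. Then for any constant C₀ > 0 there exists C₁ > 0 such that for every f ∈ L^Φ(ℝⁿ) with f ≠ 0 and every x ∈ ℝⁿ: M_ρ f(x) ≤ C₁ ‖f‖_{L^Φ} · Ψ^{-1}( Φ( Mf(x) / (C₀‖f‖_{L^Φ}) ) ). -/

import Mathlib

open MeasureTheory Metric Set Filter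
open scoped ENNReal NNReal Topology

noncomputable section

/-- A Young function `Φ : [0,∞] → [0,∞]`: convex, left-continuous, vanishing (with limit `0`)
at `0`, and equal (with limit) to `∞` at `∞`. -/
structure IsYoung (Φ : ℝ≥0∞ → ℝ≥0∞) : Prop where
  map_zero : Φ 0 = 0
  convex : ∀ p q x y : ℝ≥0∞, p + q = 1 → Φ (p * x + q * y) ≤ p * Φ x + q * Φ y
  left_continuous : ∀ r : ℝ≥0∞, Φ r = ⨆ s ∈ Set.Iio r, Φ s
  tendsto_zero : Filter.Tendsto Φ (nhdsWithin 0 (Set.Ioi 0)) (nhds 0)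
  map_top : Φ ⊤ = ⊤
  tendsto_top : Filter.Tendsto (fun r : ℝ≥0 => Φ (r : ℝ≥0∞)) Filter.atTop (nhds ⊤)

/-- The generalized (O'Neil) inverse `Φ⁻¹(s) = inf {r ≥ 0 : Φ(r) > s}` (with `inf ∅ = ∞`). -/
def yInv (Φ : ℝ≥0∞ → ℝ≥0∞) (s : ℝ≥0∞) : ℝ≥0∞ := sInf {r : ℝ≥0∞ | s < Φ r}

/-- `r^{-n}` as an extended nonnegative real. -/
def rinv (n : ℕ) (r : ℝ) : ℝ≥0∞ := ENNReal.ofReal ((r ^ n)⁻¹)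

variable {α : Type*}

/-- Luxemburg (quasi-)norm of an `ℝ≥0∞`-valued function. -/
def luxNorm (Φ : ℝ≥0∞ → ℝ≥0∞) [MeasurableSpace α] (μ : Measure α) (g : α → ℝ≥0∞) : ℝ≥0∞ :=
  sInf {lam : ℝ≥0∞ | 0 < lam ∧ lam ≠ ⊤ ∧ (∫⁻ x, Φ (g x / lam) ∂μ) ≤ 1}

/-- Weak Luxemburg quasi-norm: `sup_{λ>0} ‖λ χ_{{g>λ}}‖_{L^Φ}`. -/
def wluxNorm (Φ : ℝ≥0∞ → ℝ≥0∞) [MeasurableSpace α] (μ : Measure α) (g : α → ℝ≥0∞) : ℝ≥0∞ :=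
  ⨆ (lam : ℝ≥0∞) (_ : 0 < lam) (_ : lam ≠ ⊤),
    luxNorm Φ μ (({x | lam < g x}).indicator (fun _ => lam))

/-- `|f|` regarded as an `ℝ≥0∞`-valued function. -/
def enn (f : α → ℝ) : α → ℝ≥0∞ := fun x => (‖f x‖₊ : ℝ≥0∞)

/-- Euclidean space `ℝⁿ`. -/
abbrev Euc (n : ℕ) := EuclideanSpace ℝ (Fin n)

/-- The generalized fractional integral operator `I_ρ`. -/
def Irho (n : ℕ) (ρ : ℝ → ℝ) (f : Euc n → ℝ) (x : Euc n) : ℝ :=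
  ∫ y, (ρ (dist x y) / (dist x y) ^ n) * f y

/-- The Hardy–Littlewood maximal operator. -/
def maxOp (n : ℕ) (f : Euc n → ℝ) (x : Euc n) : ℝ≥0∞ :=
  ⨆ (r : ℝ) (_ : 0 < r), (volume (ball x r))⁻¹ * ∫⁻ y in ball x r, (‖f y‖₊ : ℝ≥0∞)

/-- The generalized fractional maximal operator `M_ρ`. -/
def Mrho (n : ℕ) (ρ : ℝ → ℝ) (f : Euc n → ℝ) (x : Euc n) : ℝ≥0∞ :=
  ⨆ (r : ℝ) (_ : 0 < r),
    ENNReal.ofReal (ρ r) * ((volume (ball x r))⁻¹ * ∫⁻ y in ball x r, (‖f y‖₊ : ℝ≥0∞))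

/-- The `∇₂` condition: `Φ(r) ≤ (1/(2C)) Φ(C r)` for some `C > 1`. -/
def Nabla2 (Φ : ℝ≥0∞ → ℝ≥0∞) : Prop :=
  ∃ C : ℝ, 1 < C ∧ ∀ r : ℝ≥0∞, Φ r ≤ ENNReal.ofReal (1 / (2 * C)) * Φ (ENNReal.ofReal C * r)

/-- `∫₀¹ ρ(t)/t dt < ∞`. -/
def RhoInt (ρ : ℝ → ℝ) : Prop :=
  (∫⁻ t in Set.Ioo (0:ℝ) 1, ENNReal.ofReal (ρ t / t)) < ⊤

/-- `sup_{r/2 ≤ t ≤ r} ρ(t) ≤ C ∫_{k₁ r}^{k₂ r} ρ(t)/t dt` for all `r > 0`. -/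
def RhoSupWith (ρ : ℝ → ℝ) (C k₁ k₂ : ℝ) : Prop :=
  0 < C ∧ 0 < k₁ ∧ k₁ < k₂ ∧ ∀ r > (0:ℝ), ∀ t ∈ Set.Icc (r / 2) r,
    ENNReal.ofReal (ρ t) ≤
      ENNReal.ofReal C * ∫⁻ s in Set.Ioo (k₁ * r) (k₂ * r), ENNReal.ofReal (ρ s / s)

def RhoSup (ρ : ℝ → ℝ) : Prop := ∃ C k₁ k₂ : ℝ, RhoSupWith ρ C k₁ k₂

/-- The condition
`Φ⁻¹(r^{-n}) ∫₀^r ρ(t)/t dt + ∫_r^∞ ρ(t) Φ⁻¹(t^{-n}) dt/t ≤ C Ψ⁻¹(r^{-n})`. -/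
def CondOrl (n : ℕ) (Φ Ψ : ℝ≥0∞ → ℝ≥0∞) (ρ : ℝ → ℝ) : Prop :=
  ∃ C : ℝ, 0 < C ∧ ∀ r > (0:ℝ),
    yInv Φ (rinv n r) * (∫⁻ t in Set.Ioo (0:ℝ) r, ENNReal.ofReal (ρ t / t))
      + (∫⁻ t in Set.Ioi r, ENNReal.ofReal (ρ t / t) * yInv Φ (rinv n t))
    ≤ ENNReal.ofReal C * yInv Ψ (rinv n r)

/-- Generalized Orlicz–Morrey norm (third kind). -/
def morNorm (n : ℕ) (Φ : ℝ≥0∞ → ℝ≥0∞) (φ : ℝ → ℝ≥0∞) (g : Euc n → ℝ≥0∞) : ℝ≥0∞ :=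
  ⨆ (x : Euc n) (r : ℝ) (_ : 0 < r),
    (φ r)⁻¹ * yInv Φ (rinv n r) * luxNorm Φ volume ((ball x r).indicator g)

/-- Weak generalized Orlicz–Morrey norm (third kind). -/
def wMorNorm (n : ℕ) (Φ : ℝ≥0∞ → ℝ≥0∞) (φ : ℝ → ℝ≥0∞) (g : Euc n → ℝ≥0∞) : ℝ≥0∞ :=
  ⨆ (x : Euc n) (r : ℝ) (_ : 0 < r),
    (φ r)⁻¹ * yInv Φ (rinv n r) * wluxNorm Φ volume ((ball x r).indicator g)

/-- A real positive function regarded as `ℝ≥0∞`-valued. -/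
def ofR (φ : ℝ → ℝ) : ℝ → ℝ≥0∞ := fun t => ENNReal.ofReal (φ t)

/-- Almost increasing (on `(0,∞)`). -/
def AlmostInc (g : ℝ → ℝ≥0∞) : Prop :=
  ∃ C : ℝ, 0 < C ∧ ∀ r s : ℝ, 0 < r → r ≤ s → g r ≤ ENNReal.ofReal C * g s

/-- Almost decreasing (on `(0,∞)`). -/
def AlmostDec (g : ℝ → ℝ≥0∞) : Prop :=
  ∃ C : ℝ, 0 < C ∧ ∀ r s : ℝ, 0 < r → r ≤ s → ENNReal.ofReal C * g s ≤ g r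

/-- The class `G_Φ`: `φ` is positive, `t ↦ φ(t)/Φ⁻¹(t^{-n})` is almost increasing and
`t ↦ φ(t)/(Φ⁻¹(t^{-n}) tⁿ)` is almost decreasing. -/
def GPhi (n : ℕ) (Φ : ℝ≥0∞ → ℝ≥0∞) (φ : ℝ → ℝ) : Prop :=
  (∀ t > (0:ℝ), 0 < φ t) ∧
  AlmostInc (fun t => ENNReal.ofReal (φ t) / yInv Φ (rinv n t)) ∧
  AlmostDec (fun t => ENNReal.ofReal (φ t) / (yInv Φ (rinv n t) * ENNReal.ofReal (t ^ n)))



section Helpers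

variable {Φ : ℝ≥0∞ → ℝ≥0∞}

lemma young_smul (hΦ : IsYoung Φ) {p u : ℝ≥0∞} (hp : p ≤ 1) : Φ (p * u) ≤ p * Φ u := by
  have h := hΦ.convex p (1 - p) u 0 (add_tsub_cancel_of_le hp)
  simpa [hΦ.map_zero] using h

lemma young_mono (hΦ : IsYoung Φ) : Monotone Φ := by
  intro u v huv
  rcases eq_or_ne v 0 with rfl | hv0
  · simp_all
  rcases eq_or_ne v ⊤ with rfl | hvT
  · rw [hΦ.map_top]; exact le_top
  have hp : u / v ≤ 1 := by
    rw [ENNReal.div_le_iff_le_mul (Or.inl hv0) (Or.inl hvT), one_mul]; exact huv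
  have h := young_smul hΦ (u := v) hp
  rw [ENNReal.div_mul_cancel hv0 hvT] at h
  exact h.trans (mul_le_of_le_one_left (zero_le) hp)

lemma le_yInv_of_le (hΦ : IsYoung Φ) {u s : ℝ≥0∞} (h : Φ u ≤ s) : u ≤ yInv Φ s :=
  le_sInf fun _r hr => le_of_not_gt fun hru => (lt_irrefl s) <|
    lt_of_lt_of_le hr ((young_mono hΦ hru.le).trans h)

lemma lt_of_yInv_lt (hΦ : IsYoung Φ) {s w : ℝ≥0∞} (h : yInv Φ s < w) : s < Φ w := by
  obtain ⟨r, hr, hrw⟩ := sInf_lt_iff.mp h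
  exact lt_of_lt_of_le hr (young_mono hΦ hrw.le)

lemma yInv_mono {s s' : ℝ≥0∞} (h : s ≤ s') : yInv Φ s ≤ yInv Φ s' :=
  sInf_le_sInf fun _r hr => lt_of_le_of_lt h hr

lemma yInv_top : yInv Φ ⊤ = ⊤ := by
  have h : {r : ℝ≥0∞ | (⊤:ℝ≥0∞) < Φ r} = ∅ := by ext r; simp
  rw [yInv, h]; exact sInf_empty

lemma yInv_ne_top (hΦ : IsYoung Φ) {s : ℝ≥0∞} (h : s ≠ ⊤) : yInv Φ s ≠ ⊤ := by
  have hev : ∀ᶠ r : ℝ≥0 in atTop, s < Φ r :=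
    hΦ.tendsto_top.eventually (eventually_gt_nhds (lt_top_iff_ne_top.mpr h))
  obtain ⟨r, hr⟩ := hev.exists
  exact ne_top_of_le_ne_top ENNReal.coe_ne_top (sInf_le hr)

lemma yInv_ne_zero (hΦ : IsYoung Φ) {s : ℝ≥0∞} (hs : s ≠ 0) : yInv Φ s ≠ 0 := by
  intro h0
  have hall : ∀ w : ℝ≥0∞, w ≠ 0 → s < Φ w := by
    intro w hw
    exact lt_of_yInv_lt hΦ (h0 ▸ pos_iff_ne_zero.mpr hw)
  have hmem : Φ ⁻¹' (Iio s) ∈ 𝓝[>] (0:ℝ≥0∞) :=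
    hΦ.tendsto_zero (isOpen_Iio.mem_nhds (pos_iff_ne_zero.mpr hs))
  rw [mem_nhdsWithin] at hmem
  obtain ⟨U, hUo, hU0, hUsub⟩ := hmem
  obtain ⟨ε, hε, hsub⟩ := (nhds_bot_basis (α := ℝ≥0∞)).mem_iff.mp (hUo.mem_nhds hU0)
  obtain ⟨w, hw0, hwε⟩ := exists_between hε
  have hmem2 : w ∈ U ∩ Ioi 0 := ⟨hsub hwε, hw0⟩
  exact absurd (hUsub hmem2) (not_lt.mpr (hall w hw0.ne').le)

lemma young_key (hΦ : IsYoung Φ) {s : ℝ≥0∞} (hs : s ≠ 0) (u : ℝ≥0∞) :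
    u * s ≤ yInv Φ s * (s + Φ u) := by
  set v := yInv Φ s with hv
  rcases le_or_gt u v with h | h
  · calc u * s ≤ v * s := mul_le_mul_left h s
    _ ≤ v * (s + Φ u) := mul_le_mul_right le_self_add v
  have hv0 : v ≠ 0 := yInv_ne_zero hΦ hs
  rcases eq_or_ne u ⊤ with rfl | huT
  · have hmt : Φ ⊤ = ⊤ := hΦ.map_top
    rw [hmt]
    have h2 : v * (s + ⊤) = ⊤ := by
      rw [add_top, ENNReal.mul_top hv0]
    rw [h2]; exact le_top
  have hΦu : s < Φ u := lt_of_yInv_lt hΦ h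
  have hΦu0 : Φ u ≠ 0 := by intro h0; rw [h0] at hΦu; exact absurd hΦu (not_lt.mpr (zero_le))
  suffices hmain : u * s ≤ v * Φ u by
    exact hmain.trans (mul_le_mul_right le_add_self v)
  rcases eq_or_ne (Φ u) ⊤ with hT | hT
  · rw [hT, ENNReal.mul_top hv0]; exact le_top
  have hu0 : u ≠ 0 := by
    intro h0; rw [h0] at h; exact absurd h (not_lt.mpr (zero_le))
  have hstep : ∀ w ∈ Ioc v u, u * s ≤ w * Φ u := by
    intro w hw
    have hws : s < Φ w := lt_of_yInv_lt hΦ hw.1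
    have hcv : Φ w ≤ (w / u) * Φ u := by
      have hp : w / u ≤ 1 := by
        rw [ENNReal.div_le_iff_le_mul (Or.inl hu0) (Or.inl huT), one_mul]; exact hw.2
      have h3 := young_smul hΦ (u := u) hp
      rwa [ENNReal.div_mul_cancel hu0 huT] at h3
    have h4 : s < (w / u) * Φ u := lt_of_lt_of_le hws hcv
    have h2 : s * u ≤ (w / u) * Φ u * u := mul_le_mul_left h4.le u
    calc u * s = s * u := mul_comm u s
      _ ≤ (w / u) * Φ u * u := h2
      _ = w / u * u * Φ u := by ring
      _ = w * Φ u := by rw [ENNReal.div_mul_cancel hu0 huT]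
  have hdiv : u * s / Φ u ≤ v := by
    have h5 : ∀ w ∈ Ioc v u, u * s / Φ u ≤ w := by
      intro w hw
      rw [ENNReal.div_le_iff_le_mul (Or.inl hΦu0) (Or.inl hT)]
      exact hstep w hw
    have hle : u * s / Φ u ≤ sInf (Ioc v u) := le_sInf fun w hw => h5 w hw
    rwa [csInf_Ioc h] at hle
  calc u * s = u * s / Φ u * Φ u := (ENNReal.div_mul_cancel hΦu0 hT).symm
    _ ≤ v * Φ u := mul_le_mul_left hdiv (Φ u)

lemma ediv_mul_le (a b : ℝ≥0∞) : a / b * b ≤ a := by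
  rcases eq_or_ne b 0 with rfl | hb0
  · simp
  rcases eq_or_ne b ⊤ with rfl | hbT
  · simp [ENNReal.div_top]
  · rw [ENNReal.div_mul_cancel hb0 hbT]

lemma le_mul_sInf {a c : ℝ≥0∞} {S : Set ℝ≥0∞} (hc : c ≠ ⊤) (hS : S.Nonempty)
    (h : ∀ l ∈ S, a ≤ c * l) : a ≤ c * sInf S := by
  rcases eq_or_ne c 0 with rfl | hc0
  · obtain ⟨l, hl⟩ := hS
    have := h l hl
    simpa using this
  have hd : a / c ≤ sInf S := le_sInf fun l hl => by
    rw [ENNReal.div_le_iff_le_mul (Or.inl hc0) (Or.inl hc)]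
    exact (h l hl).trans (le_of_eq (mul_comm c l))
  calc a = a / c * c := (ENNReal.div_mul_cancel hc0 hc).symm
    _ ≤ sInf S * c := mul_le_mul_left hd c
    _ = c * sInf S := mul_comm _ _

lemma rinv_ne_zero {n : ℕ} {r : ℝ} (hr : 0 < r) : rinv n r ≠ 0 := by
  rw [rinv]
  simp only [ne_eq, ENNReal.ofReal_eq_zero, not_le]
  positivity

lemma rinv_ne_top {n : ℕ} {r : ℝ} : rinv n r ≠ ⊤ := ENNReal.ofReal_ne_top

lemma rinv_anti {n : ℕ} {r s : ℝ} (hr : 0 < r) (hrs : r ≤ s) : rinv n s ≤ rinv n r := by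
  rw [rinv, rinv]
  apply ENNReal.ofReal_le_ofReal
  apply inv_anti₀ (by positivity)
  exact pow_le_pow_left₀ hr.le hrs n

lemma exists_rinv_eq {n : ℕ} (hn : 1 ≤ n) {ξ : ℝ≥0∞} (h0 : ξ ≠ 0) (hT : ξ ≠ ⊤) :
    ∃ r : ℝ, 0 < r ∧ rinv n r = ξ := by
  have hξ : 0 < ξ.toReal := ENNReal.toReal_pos h0 hT
  refine ⟨(ξ.toReal⁻¹) ^ ((n:ℝ)⁻¹), Real.rpow_pos_of_pos (by positivity) _, ?_⟩
  rw [rinv]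
  have hpow : ((ξ.toReal⁻¹) ^ ((n:ℝ)⁻¹)) ^ n = ξ.toReal⁻¹ :=
    Real.rpow_inv_natCast_pow (by positivity) (by omega)
  rw [hpow, inv_inv, ENNReal.ofReal_toReal hT]

lemma vol_ball_eq {n : ℕ} (hn : 1 ≤ n) (x : Euc n) {r : ℝ} (hr : 0 < r) :
    volume (ball x r) = ENNReal.ofReal (r ^ n) * volume (ball (0 : Euc n) 1) := by
  have hne : Nonempty (Fin n) := ⟨⟨0, hn⟩⟩
  have hnt : Nontrivial (Euc n) := inferInstanceAs (Nontrivial (PiLp 2 fun _ : Fin n => ℝ))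
  rw [Measure.addHaar_ball_of_pos volume x hr, finrank_euclideanSpace_fin]

/-- The average of `|f|` over a ball is controlled by the Luxemburg norm. -/
lemma avg_bound {n : ℕ} (hn : 1 ≤ n) (hΦ : IsYoung Φ)
    (f : Euc n → ℝ) (hN : luxNorm Φ volume (enn f) ≠ ⊤) (x : Euc n) {r : ℝ} (hr : 0 < r) :
    (volume (ball x r))⁻¹ * ∫⁻ y in ball x r, (‖f y‖₊ : ℝ≥0∞) ≤
      (1 + (volume (ball (0 : Euc n) 1))⁻¹) * yInv Φ (rinv n r) *
        luxNorm Φ volume (enn f) := by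
  set c := volume (ball (0 : Euc n) 1) with hc
  have hc0 : c ≠ 0 := (measure_ball_pos _ _ one_pos).ne'
  have hcT : c ≠ ⊤ := measure_ball_lt_top.ne
  set s := rinv n r with hs
  have hs0 : s ≠ 0 := rinv_ne_zero hr
  have hsT : s ≠ ⊤ := rinv_ne_top
  set Y := yInv Φ s with hY
  have hYT : Y ≠ ⊤ := yInv_ne_top hΦ hsT
  have hcinvT : c⁻¹ ≠ ⊤ := ENNReal.inv_ne_top.mpr hc0
  have hKT : (1 + c⁻¹) * Y ≠ ⊤ :=
    ENNReal.mul_ne_top (by rw [ENNReal.add_ne_top]; exact ⟨ENNReal.one_ne_top, hcinvT⟩) hYT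
  have hSne : {lam : ℝ≥0∞ | 0 < lam ∧ lam ≠ ⊤ ∧ (∫⁻ z, Φ (enn f z / lam)) ≤ 1}.Nonempty := by
    by_contra hne
    rw [Set.not_nonempty_iff_eq_empty] at hne
    apply hN
    rw [luxNorm, hne, sInf_empty]
  have key : ∀ lam ∈ {lam : ℝ≥0∞ | 0 < lam ∧ lam ≠ ⊤ ∧ (∫⁻ z, Φ (enn f z / lam)) ≤ 1},
      (volume (ball x r))⁻¹ * ∫⁻ y in ball x r, (‖f y‖₊ : ℝ≥0∞) ≤ ((1 + c⁻¹) * Y) * lam := by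
    rintro lam ⟨hl0, hlT, hint⟩
    set g : Euc n → ℝ≥0∞ := fun y => (‖f y‖₊ : ℝ≥0∞) / lam with hg
    set I := ∫⁻ y in ball x r, g y with hI
    have h1 : ∫⁻ y in ball x r, (‖f y‖₊ : ℝ≥0∞) = lam * I := by
      rw [hI, ← lintegral_const_mul' lam _ hlT]
      congr 1
      ext y
      rw [hg]
      exact (ENNReal.mul_div_cancel hl0.ne' hlT).symm
    have hvol : volume (ball x r) = ENNReal.ofReal (r ^ n) * c := vol_ball_eq hn x hr
    have hor0 : ENNReal.ofReal (r ^ n) ≠ 0 := by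
      simp only [ne_eq, ENNReal.ofReal_eq_zero, not_le]; positivity
    have hinvB : (volume (ball x r))⁻¹ = s * c⁻¹ := by
      rw [hvol, ENNReal.mul_inv (Or.inl hor0) (Or.inl ENNReal.ofReal_ne_top)]
      congr 1
      rw [hs, rinv, ENNReal.ofReal_inv_of_pos (by positivity)]
    have h7 : s * volume (ball x r) = c := by
      rw [hvol, ← mul_assoc, hs, rinv, ← ENNReal.ofReal_mul (by positivity),
        inv_mul_cancel₀ (by positivity : (r:ℝ) ^ n ≠ 0), ENNReal.ofReal_one, one_mul]
    have hIs : I * s ≤ Y * (c + 1) := by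
      calc I * s = ∫⁻ y in ball x r, g y * s := (lintegral_mul_const' s _ hsT).symm
        _ ≤ ∫⁻ y in ball x r, Y * (s + Φ (g y)) :=
            lintegral_mono fun y => young_key hΦ hs0 (g y)
        _ = Y * ∫⁻ y in ball x r, (s + Φ (g y)) := lintegral_const_mul' Y _ hYT
        _ = Y * (s * volume (ball x r) + ∫⁻ y in ball x r, Φ (g y)) := by
            rw [lintegral_add_left measurable_const, setLIntegral_const]
        _ ≤ Y * (c + 1) := by
            apply mul_le_mul_right
            apply add_le_add (le_of_eq h7)
            exact (setLIntegral_le_lintegral _ _).trans hint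
    have hccc : c⁻¹ * (c + 1) = 1 + c⁻¹ := by
      rw [mul_add, ENNReal.inv_mul_cancel hc0 hcT, mul_one]
    calc (volume (ball x r))⁻¹ * ∫⁻ y in ball x r, (‖f y‖₊ : ℝ≥0∞)
        = s * c⁻¹ * (lam * I) := by rw [hinvB, h1]
      _ = c⁻¹ * lam * (I * s) := by ring
      _ ≤ c⁻¹ * lam * (Y * (c + 1)) := mul_le_mul_right hIs _
      _ = c⁻¹ * (c + 1) * Y * lam := by ring
      _ = (1 + c⁻¹) * Y * lam := by rw [hccc]
  exact le_mul_sInf hKT hSne key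

lemma exists_ball_pos {n : ℕ} (f : Euc n → ℝ) (hf : Measurable f)
    (hfne : ¬ (f =ᵐ[volume] 0)) (x : Euc n) :
    ∃ R : ℝ, 0 < R ∧ 0 < ∫⁻ y in ball x R, (‖f y‖₊ : ℝ≥0∞) := by
  by_contra h
  push_neg at h
  have hz : ∀ R : ℝ, 0 < R → ∫⁻ y in ball x R, (‖f y‖₊ : ℝ≥0∞) = 0 := fun R hR =>
    le_antisymm (h R hR) (zero_le)
  have huniv : ∫⁻ y, (‖f y‖₊ : ℝ≥0∞) = 0 := by
    apply le_antisymm ?_ (zero_le)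
    have hU : (univ : Set (Euc n)) = ⋃ k : ℕ, ball x (k + 1) := by
      ext y
      simp only [mem_univ, mem_iUnion, mem_ball, true_iff]
      obtain ⟨k, hk⟩ := exists_nat_gt (dist y x)
      exact ⟨k, by push_cast; linarith⟩
    have hle := lintegral_iUnion_le (μ := volume) (fun k : ℕ => ball x (k + 1))
      (fun y => (‖f y‖₊ : ℝ≥0∞))
    have h0 : ∑' k : ℕ, ∫⁻ y in ball x ((k : ℝ) + 1), (‖f y‖₊ : ℝ≥0∞) = 0 := by
      refine ENNReal.summable.tsum_eq_zero_iff |>.mpr fun k => hz _ (by positivity)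
    calc ∫⁻ y, (‖f y‖₊ : ℝ≥0∞) = ∫⁻ y in ⋃ k : ℕ, ball x ((k:ℝ) + 1), (‖f y‖₊ : ℝ≥0∞) := by
          rw [← hU, Measure.restrict_univ]
      _ ≤ ∑' k : ℕ, ∫⁻ y in ball x ((k:ℝ) + 1), (‖f y‖₊ : ℝ≥0∞) := hle
      _ = 0 := h0
  have hae : (fun y => (‖f y‖₊ : ℝ≥0∞)) =ᵐ[volume] 0 :=
    (lintegral_eq_zero_iff (hf.nnnorm.coe_nnreal_ennreal)).mp huniv
  exact hfne (hae.mono fun y hy => by simpa using hy)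

end Helpers

/-- Hedberg-type pointwise estimate for `M_ρ`. -/
theorem stmt6 (n : ℕ) (hn : 1 ≤ n) (Φ Ψ : ℝ≥0∞ → ℝ≥0∞)
    (hΦ : IsYoung Φ) (hΨ : IsYoung Ψ)
    (ρ : ℝ → ℝ) (hρpos : ∀ t > (0:ℝ), 0 < ρ t)
    (hmono : ∀ s t : ℝ, 0 < s → s ≤ t → ρ s ≤ ρ t)
    (hdec : ∀ s t : ℝ, 0 < s → s ≤ t → ρ t / t ^ n ≤ ρ s / s ^ n)
    (hcond : ∃ C : ℝ, 0 < C ∧ ∀ r > (0:ℝ),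
      ENNReal.ofReal (ρ r) ≤ ENNReal.ofReal C * (yInv Ψ (rinv n r) / yInv Φ (rinv n r))) :
    ∀ C₀ : ℝ, 0 < C₀ → ∃ C₁ : ℝ, 0 < C₁ ∧ ∀ f : Euc n → ℝ, Measurable f →
      luxNorm Φ volume (enn f) ≠ ⊤ → ¬ (f =ᵐ[volume] 0) →
      ∀ x : Euc n,
        Mrho n ρ f x ≤
          ENNReal.ofReal C₁ * luxNorm Φ volume (enn f) *
            yInv Ψ (Φ (maxOp n f x / (ENNReal.ofReal C₀ * luxNorm Φ volume (enn f)))) := by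
  intro C₀ hC₀
  obtain ⟨C', hC'pos, hC⟩ := hcond
  set c := volume (ball (0 : Euc n) 1) with hcdef
  have hc0 : c ≠ 0 := (measure_ball_pos _ _ one_pos).ne'
  have hcT : c ≠ ⊤ := measure_ball_lt_top.ne
  have hcinvT : c⁻¹ ≠ ⊤ := ENNReal.inv_ne_top.mpr hc0
  refine ⟨2 * C' * (C₀ + (1 + c⁻¹.toReal)), by positivity, ?_⟩
  have hC₁eq : ENNReal.ofReal (2 * C' * (C₀ + (1 + c⁻¹.toReal))) =
      2 * ENNReal.ofReal C' * (ENNReal.ofReal C₀ + (1 + c⁻¹)) := by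
    rw [ENNReal.ofReal_mul (by positivity), ENNReal.ofReal_mul (by norm_num : (0:ℝ) ≤ 2),
      ENNReal.ofReal_ofNat, ENNReal.ofReal_add hC₀.le (by positivity),
      ENNReal.ofReal_add one_pos.le ENNReal.toReal_nonneg, ENNReal.ofReal_one,
      ENNReal.ofReal_toReal hcinvT]
  intro f hf hNT hfne x
  set N := luxNorm Φ volume (enn f) with hNdef
  obtain ⟨R, hR, hRpos⟩ := exists_ball_pos f hf hfne x
  have hvolR : volume (ball x R) ≠ ⊤ := by
    rw [vol_ball_eq hn x hR]
    exact ENNReal.mul_ne_top ENNReal.ofReal_ne_top hcT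
  have havgR : (0:ℝ≥0∞) < (volume (ball x R))⁻¹ * ∫⁻ y in ball x R, (‖f y‖₊ : ℝ≥0∞) :=
    ENNReal.mul_pos (ENNReal.inv_ne_zero.mpr hvolR) hRpos.ne'
  have hMxge : (volume (ball x R))⁻¹ * ∫⁻ y in ball x R, (‖f y‖₊ : ℝ≥0∞) ≤ maxOp n f x :=
    le_iSup₂ (f := fun r (_ : 0 < r) =>
      (volume (ball x r))⁻¹ * ∫⁻ y in ball x r, (‖f y‖₊ : ℝ≥0∞)) R hR
  have hMx0 : maxOp n f x ≠ 0 := (lt_of_lt_of_le havgR hMxge).ne'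
  have hN0 : N ≠ 0 := by
    intro h0
    have hb := avg_bound hn hΦ f hNT x hR
    rw [← hNdef, h0, mul_zero] at hb
    exact havgR.ne' (le_antisymm hb (zero_le))
  set d := ENNReal.ofReal C₀ * N with hddef
  have hd0 : d ≠ 0 := mul_ne_zero (ENNReal.ofReal_pos.mpr hC₀).ne' hN0
  have hdT : d ≠ ⊤ := ENNReal.mul_ne_top ENNReal.ofReal_ne_top hNT
  set t := maxOp n f x / d with htdef
  have ht0 : t ≠ 0 := (ENNReal.div_pos hMx0 hdT).ne'
  have hMeq : maxOp n f x = t * d := (ENNReal.div_mul_cancel hd0 hdT).symm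
  -- trivial case Φ t = ⊤
  rcases eq_or_ne (Φ t) ⊤ with hT | hT
  · rw [hT, yInv_top, ENNReal.mul_top
      (mul_ne_zero (ENNReal.ofReal_pos.mpr (by positivity)).ne' hN0)]
    exact le_top
  -- choose r₀
  have hr₀ex : ∃ r₀ : ℝ, 0 < r₀ ∧ t ≤ yInv Φ (rinv n r₀) ∧
      yInv Ψ (rinv n r₀) ≤ 2 * yInv Ψ (Φ t) := by
    rcases eq_or_ne (Φ t) 0 with h0 | h0
    · -- degenerate case
      set b := yInv Ψ (0 : ℝ≥0∞) with hbdef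
      have hbT : b ≠ ⊤ := yInv_ne_top hΨ (by simp)
      have htT : t ≠ ⊤ := fun ht => hT (by rw [ht, hΦ.map_top])
      have hb0 : b ≠ 0 := by
        intro hb
        have key : ∀ u : ℝ≥0∞, 0 < Ψ u → ENNReal.ofReal (ρ 1) * t ≤ ENNReal.ofReal C' * u := by
          intro u hu
          obtain ⟨ε, hε0, hε2⟩ := exists_between hu
          have hξ0 : (min ε 1 : ℝ≥0∞) ≠ 0 := by
            simp only [ne_eq, min_eq_iff]
            intro hmin
            rcases hmin with ⟨h1, _⟩ | ⟨h1, _⟩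
            · exact hε0.ne' h1
            · exact one_ne_zero h1
          have hξT : (min ε 1 : ℝ≥0∞) ≠ ⊤ := ne_top_of_le_ne_top ENNReal.one_ne_top (min_le_right _ _)
          obtain ⟨r₁, hr₁, hre⟩ := exists_rinv_eq hn hξ0 hξT
          have hr₁1 : 1 ≤ r₁ := by
            by_contra hlt
            push_neg at hlt
            have h1lt : (1:ℝ≥0∞) < rinv n r₁ := by
              rw [rinv]
              have : (1:ℝ) < (r₁ ^ n)⁻¹ := by
                rw [lt_inv_comm₀ one_pos (by positivity)]
                simpa using pow_lt_one₀ hr₁.le hlt (by omega)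
              calc (1:ℝ≥0∞) = ENNReal.ofReal 1 := ENNReal.ofReal_one.symm
                _ < ENNReal.ofReal ((r₁ ^ n)⁻¹) := ENNReal.ofReal_lt_ofReal_iff_of_nonneg
                    one_pos.le |>.mpr this
            rw [hre] at h1lt
            exact absurd h1lt (not_lt.mpr (min_le_right _ _))
          have hΦi : t ≤ yInv Φ (rinv n r₁) := le_yInv_of_le hΦ (h0 ▸ zero_le)
          have hΨi : yInv Ψ (rinv n r₁) ≤ u := by
            apply sInf_le
            show rinv n r₁ < Ψ u
            calc rinv n r₁ = min ε 1 := hre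
              _ ≤ ε := min_le_left _ _
              _ < Ψ u := hε2
          calc ENNReal.ofReal (ρ 1) * t ≤ ENNReal.ofReal (ρ r₁) * t :=
              mul_le_mul_left (ENNReal.ofReal_le_ofReal (hmono 1 r₁ one_pos hr₁1)) t
            _ ≤ ENNReal.ofReal C' * (yInv Ψ (rinv n r₁) / yInv Φ (rinv n r₁)) * t :=
              mul_le_mul_left (hC r₁ hr₁) t
            _ ≤ ENNReal.ofReal C' * (u / t) * t :=
              mul_le_mul_left (mul_le_mul_right (ENNReal.div_le_div hΨi hΦi) _) t
            _ = ENNReal.ofReal C' * (u / t * t) := by ring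
            _ ≤ ENNReal.ofReal C' * u := mul_le_mul_right (ediv_mul_le u t) _
        have hCT : ENNReal.ofReal C' ≠ ⊤ := ENNReal.ofReal_ne_top
        have hC0' : ENNReal.ofReal C' ≠ 0 := (ENNReal.ofReal_pos.mpr hC'pos).ne'
        have hdivle : ENNReal.ofReal (ρ 1) * t / ENNReal.ofReal C' ≤ b := by
          rw [hbdef, yInv]
          refine le_sInf fun u hu => ?_
          rw [ENNReal.div_le_iff_le_mul (Or.inl hC0') (Or.inl hCT)]
          exact (key u hu).trans (le_of_eq (mul_comm _ _))
        rw [hb] at hdivle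
        have hz : ENNReal.ofReal (ρ 1) * t = 0 := by
          have := le_antisymm hdivle (zero_le)
          rcases ENNReal.div_eq_zero_iff.mp this with h | h
          · exact h
          · exact absurd h hCT
        exact (mul_ne_zero (ENNReal.ofReal_pos.mpr (hρpos 1 one_pos)).ne' ht0) hz
      have h2b : 0 < Ψ (2 * b) := by
        have hlt : b < 2 * b := by
          nth_rewrite 1 [← one_mul b]
          exact ENNReal.mul_lt_mul_left hb0 hbT (by norm_num)
        have hlt' : sInf {u : ℝ≥0∞ | (0:ℝ≥0∞) < Ψ u} < 2 * b := by
          rw [← yInv]; exact hbdef ▸ hlt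
        obtain ⟨u, hu, hub⟩ := sInf_lt_iff.mp hlt'
        exact lt_of_lt_of_le hu (young_mono hΨ hub.le)
      obtain ⟨ε, hε0, hε2⟩ := exists_between h2b
      obtain ⟨r₀, hr₀, hre⟩ := exists_rinv_eq hn hε0.ne' (ne_top_of_lt hε2)
      refine ⟨r₀, hr₀, le_yInv_of_le hΦ (h0 ▸ zero_le), ?_⟩
      have h1 : yInv Ψ (rinv n r₀) ≤ 2 * b := sInf_le (by rw [hre]; exact hε2)
      rw [h0, ← hbdef]
      exact h1
    · -- nondegenerate case
      obtain ⟨r₀, hr₀, hre⟩ := exists_rinv_eq hn h0 hT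
      refine ⟨r₀, hr₀, ?_, ?_⟩
      · rw [hre]; exact le_yInv_of_le hΦ le_rfl
      · rw [hre]
        nth_rewrite 1 [← one_mul (yInv Ψ (Φ t))]
        exact mul_le_mul_left one_le_two _
  obtain ⟨r₀, hr₀pos, hP1, hP2⟩ := hr₀ex
  -- final estimate, term by term
  rw [Mrho]
  refine iSup₂_le fun r hr => ?_
  set A := (volume (ball x r))⁻¹ * ∫⁻ y in ball x r, (‖f y‖₊ : ℝ≥0∞) with hA
  have havgM : A ≤ maxOp n f x :=
    le_iSup₂ (f := fun r (_ : 0 < r) =>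
      (volume (ball x r))⁻¹ * ∫⁻ y in ball x r, (‖f y‖₊ : ℝ≥0∞)) r hr
  rcases le_total r r₀ with hrr | hrr
  · -- small radii
    calc ENNReal.ofReal (ρ r) * A ≤ ENNReal.ofReal (ρ r₀) * (t * d) := by
          rw [← hMeq]
          exact mul_le_mul' (ENNReal.ofReal_le_ofReal (hmono r r₀ hr hrr)) havgM
      _ ≤ ENNReal.ofReal C' * (yInv Ψ (rinv n r₀) / yInv Φ (rinv n r₀)) * (t * d) :=
          mul_le_mul_left (hC r₀ hr₀pos) _
      _ ≤ ENNReal.ofReal C' * (yInv Ψ (rinv n r₀) / yInv Φ (rinv n r₀)) *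
            (yInv Φ (rinv n r₀) * d) :=
          mul_le_mul_right (mul_le_mul_left hP1 d) _
      _ = ENNReal.ofReal C' * (yInv Ψ (rinv n r₀) / yInv Φ (rinv n r₀) * yInv Φ (rinv n r₀)) *
            d := by ring
      _ ≤ ENNReal.ofReal C' * yInv Ψ (rinv n r₀) * d :=
          mul_le_mul_left (mul_le_mul_right (ediv_mul_le _ _) _) d
      _ ≤ ENNReal.ofReal C' * (2 * yInv Ψ (Φ t)) * d :=
          mul_le_mul_left (mul_le_mul_right hP2 _) d
      _ = 2 * ENNReal.ofReal C' * ENNReal.ofReal C₀ * N * yInv Ψ (Φ t) := by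
          rw [hddef]; ring
      _ ≤ 2 * ENNReal.ofReal C' * (ENNReal.ofReal C₀ + (1 + c⁻¹)) * N * yInv Ψ (Φ t) := by
          refine mul_le_mul_left (mul_le_mul_left (mul_le_mul_right le_self_add _) N) _
      _ = ENNReal.ofReal (2 * C' * (C₀ + (1 + c⁻¹.toReal))) * N * yInv Ψ (Φ t) := by
          rw [hC₁eq]
  · -- large radii
    have hAb : A ≤ (1 + c⁻¹) * yInv Φ (rinv n r) * N := avg_bound hn hΦ f hNT x hr
    calc ENNReal.ofReal (ρ r) * A
        ≤ ENNReal.ofReal C' * (yInv Ψ (rinv n r) / yInv Φ (rinv n r)) *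
            ((1 + c⁻¹) * yInv Φ (rinv n r) * N) := mul_le_mul' (hC r hr) hAb
      _ = ENNReal.ofReal C' * (1 + c⁻¹) * N *
            (yInv Ψ (rinv n r) / yInv Φ (rinv n r) * yInv Φ (rinv n r)) := by ring
      _ ≤ ENNReal.ofReal C' * (1 + c⁻¹) * N * yInv Ψ (rinv n r) :=
          mul_le_mul_right (ediv_mul_le _ _) _
      _ ≤ ENNReal.ofReal C' * (1 + c⁻¹) * N * yInv Ψ (rinv n r₀) :=
          mul_le_mul_right (yInv_mono (rinv_anti hr₀pos hrr)) _
      _ ≤ ENNReal.ofReal C' * (1 + c⁻¹) * N * (2 * yInv Ψ (Φ t)) :=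
          mul_le_mul_right hP2 _
      _ = 2 * ENNReal.ofReal C' * (1 + c⁻¹) * N * yInv Ψ (Φ t) := by ring
      _ ≤ 2 * ENNReal.ofReal C' * (ENNReal.ofReal C₀ + (1 + c⁻¹)) * N * yInv Ψ (Φ t) := by
          refine mul_le_mul_left (mul_le_mul_left (mul_le_mul_right le_add_self _) N) _
      _ = ENNReal.ofReal (2 * C' * (C₀ + (1 + c⁻¹.toReal))) * N * yInv Ψ (Φ t) := by
          rw [hC₁eq]


end
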